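/- Let a < b be real numbers and let f : ℝ → ℝ be continuous and nonnegative on [a,b], not identically zero on [a,b]. For each positive integer N and grid points x_k = a + k(b−a)/N (k = 0,…,N−1), the sequence (Σ_{k=0}^{N−1} f(x_k))² / (N · Σ_{k=0}^{N−1} f(x_k)²) converges, as N → ∞, to L = (∫_a^b f)² / ((b−a) · ∫_a^b f²), and moreover L ≥ (∫_a^b f)² / ((b−a)² · (sup_{x ∈ [a,b]} f(x))²). -/

import Mathlib

open scoped Topology

open Filter MeasureTheory intervalIntegral in
lemma riemann_sum_tendsto_aux (a b : ℝ) (hab : a < b) (g : ℝ → ℝ)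
    (hg : ContinuousOn g (Set.Icc a b)) :
    Filter.Tendsto (fun N : ℕ => ((b - a) / N) * ∑ k ∈ Finset.range N, g (a + k * (b - a) / N))
      Filter.atTop (𝓝 (∫ x in a..b, g x)) := by
  have hba : (0:ℝ) < b - a := sub_pos.mpr hab
  rw [Metric.tendsto_atTop]
  intro ε hε
  have hε' : 0 < ε / (2 * (b - a)) := by positivity
  obtain ⟨δ, hδ, hδ'⟩ := Metric.uniformContinuousOn_iff.mp
    (isCompact_Icc.uniformContinuousOn_of_continuous hg) (ε / (2 * (b - a))) hε'
  obtain ⟨M, hM⟩ := exists_nat_gt ((b - a) / δ)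
  refine ⟨M + 1, fun N hN => ?_⟩
  have hN1 : 1 ≤ N := le_trans (Nat.le_add_left 1 M) hN
  have hNpos : (0:ℝ) < N := by exact_mod_cast hN1
  have hNne : (N:ℝ) ≠ 0 := ne_of_gt hNpos
  have h1 : (b - a) / δ < N := lt_of_lt_of_le hM (by exact_mod_cast le_trans (Nat.le_succ M) hN)
  have hmesh : (b - a) / N < δ := by
    rw [div_lt_iff₀ hNpos]
    rw [div_lt_iff₀ hδ] at h1
    nlinarith
  set p : ℕ → ℝ := fun k => a + k * (b - a) / N with hp_def
  have hstep : ∀ k : ℕ, p (k + 1) - p k = (b - a) / N := by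
    intro k
    simp only [hp_def]
    push_cast
    field_simp
    ring
  have hple : ∀ k : ℕ, k ≤ N → p k ∈ Set.Icc a b := by
    intro k hk
    constructor
    · have : 0 ≤ (k : ℝ) * (b - a) / N := by positivity
      simp only [hp_def]; linarith
    · have hkN : (k : ℝ) ≤ N := by exact_mod_cast hk
      have : (k : ℝ) * (b - a) / N ≤ (N : ℝ) * (b - a) / N := by
        apply div_le_div_of_nonneg_right ?_ hNpos.le
        exact mul_le_mul_of_nonneg_right hkN hba.le
      simp only [hp_def]
      have h2 : (N : ℝ) * (b - a) / N = b - a := by field_simp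
      linarith [h2 ▸ this]
  have hmono : ∀ k : ℕ, p k ≤ p (k + 1) := by
    intro k
    have h2 := hstep k
    have h3 : (0:ℝ) < (b - a) / N := by positivity
    have h4 : 0 ≤ p (k + 1) - p k := by rw [h2]; positivity
    exact sub_nonneg.mp h4
  have hsub : ∀ k : ℕ, k < N → Set.uIcc (p k) (p (k + 1)) ⊆ Set.Icc a b := by
    intro k hk
    rw [Set.uIcc_of_le (hmono k)]
    exact Set.Icc_subset_Icc (hple k hk.le).1 (hple (k + 1) hk).2
  have hint : ∀ k < N, IntervalIntegrable g volume (p k) (p (k + 1)) := by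
    intro k hk
    exact (hg.mono (hsub k hk)).intervalIntegrable
  have hp0 : p 0 = a := by simp [hp_def]
  have hpN : p N = b := by
    simp only [hp_def]
    field_simp
    ring
  have hsplit : (∫ x in a..b, g x) = ∑ k ∈ Finset.range N, ∫ x in p k..p (k + 1), g x := by
    rw [intervalIntegral.sum_integral_adjacent_intervals hint, hp0, hpN]
  have hterm : ∀ k ∈ Finset.range N,
      |((b - a) / N) * g (p k) - ∫ x in p k..p (k + 1), g x| ≤
        (ε / (2 * (b - a))) * ((b - a) / N) := by
    intro k hk
    rw [Finset.mem_range] at hk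
    have hconst : ((b - a) / N) * g (p k) = ∫ _x in p k..p (k + 1), g (p k) := by
      rw [intervalIntegral.integral_const, hstep k, smul_eq_mul]
    rw [hconst, ← intervalIntegral.integral_sub intervalIntegrable_const (hint k hk)]
    have := intervalIntegral.norm_integral_le_of_norm_le_const
      (f := fun x => g (p k) - g x) (C := ε / (2 * (b - a))) (a := p k) (b := p (k + 1)) ?_
    · rw [Real.norm_eq_abs] at this
      refine le_trans this ?_
      rw [abs_of_nonneg (by linarith [hstep k, hmono k] : (0:ℝ) ≤ p (k+1) - p k), hstep k]
    · intro x hx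
      rw [Set.uIoc_of_le (hmono k)] at hx
      have hxmem : x ∈ Set.Icc a b := by
        constructor
        · linarith [(hple k hk.le).1, hx.1]
        · linarith [(hple (k + 1) hk).2, hx.2]
      have hdist : dist (p k) x < δ := by
        have h2 := hstep k
        rw [Real.dist_eq]
        have habs : |p k - x| = x - p k := by
          rw [abs_of_nonpos (by linarith [hx.1])]; ring
        rw [habs]
        calc x - p k ≤ p (k + 1) - p k := by linarith [hx.2]
          _ = (b - a) / N := h2
          _ < δ := hmesh
      have := hδ' (p k) (hple k hk.le) x hxmem hdist
      rw [Real.dist_eq] at this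
      exact le_of_lt (by simpa [Real.norm_eq_abs] using this)
  calc dist (((b - a) / N) * ∑ k ∈ Finset.range N, g (a + k * (b - a) / N)) (∫ x in a..b, g x)
      = |∑ k ∈ Finset.range N, (((b - a) / N) * g (p k) - ∫ x in p k..p (k + 1), g x)| := by
        rw [Real.dist_eq, hsplit, Finset.mul_sum, ← Finset.sum_sub_distrib]
    _ ≤ ∑ k ∈ Finset.range N, |((b - a) / N) * g (p k) - ∫ x in p k..p (k + 1), g x| :=
        Finset.abs_sum_le_sum_abs _ _
    _ ≤ ∑ _k ∈ Finset.range N, (ε / (2 * (b - a))) * ((b - a) / N) :=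
        Finset.sum_le_sum hterm
    _ = ε / 2 := by
        rw [Finset.sum_const, Finset.card_range, nsmul_eq_mul]
        field_simp
    _ < ε := by linarith

/-- For a continuous nonnegative `f` on `[a,b]`, not identically zero, the fidelity
`(Σ_k f(x_k))² / (N Σ_k f(x_k)²)` on the uniform grid converges to
`L = (∫_a^b f)² / ((b-a) ∫_a^b f²)`, and `L` is bounded below by
`(∫_a^b f)² / ((b-a)² (sup_{[a,b]} f)²)`, i.e. by `𝓕²/(b-a)²` for the filling ratio `𝓕`. -/
theorem fidelity_with_uniform_state_tendsto_and_filling_ratio_bound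
    (a b : ℝ) (hab : a < b) (f : ℝ → ℝ)
    (hf : ContinuousOn f (Set.Icc a b))
    (hpos : ∀ x ∈ Set.Icc a b, 0 ≤ f x)
    (hne : ∃ x ∈ Set.Icc a b, f x ≠ 0) :
    Filter.Tendsto
      (fun N : ℕ =>
        (∑ k ∈ Finset.range N, f (a + k * (b - a) / N)) ^ 2 /
          ((N : ℝ) * ∑ k ∈ Finset.range N, f (a + k * (b - a) / N) ^ 2))
      Filter.atTop
      (𝓝 ((∫ x in a..b, f x) ^ 2 / ((b - a) * ∫ x in a..b, f x ^ 2))) ∧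
    (∫ x in a..b, f x) ^ 2 / ((b - a) ^ 2 * (sSup (f '' Set.Icc a b)) ^ 2) ≤
      (∫ x in a..b, f x) ^ 2 / ((b - a) * ∫ x in a..b, f x ^ 2) := by
  have hba : (0:ℝ) < b - a := sub_pos.mpr hab
  obtain ⟨x₀, hx₀, hfx₀⟩ := hne
  have hfx₀pos : 0 < f x₀ := lt_of_le_of_ne (hpos x₀ hx₀) (Ne.symm hfx₀)
  have hf2 : ContinuousOn (fun x => f x ^ 2) (Set.Icc a b) := hf.pow 2
  have hI2pos : 0 < ∫ x in a..b, f x ^ 2 :=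
    intervalIntegral.integral_pos hab hf2
      (fun x hx => sq_nonneg _)
      ⟨x₀, hx₀, pow_pos hfx₀pos 2⟩
  have hden : (b - a) * ∫ x in a..b, f x ^ 2 ≠ 0 := by positivity
  constructor
  · have h1 := riemann_sum_tendsto_aux a b hab f hf
    have h2 := riemann_sum_tendsto_aux a b hab (fun x => f x ^ 2) hf2
    have htend : Filter.Tendsto
        (fun N : ℕ =>
          (((b - a) / N) * ∑ k ∈ Finset.range N, f (a + k * (b - a) / N)) ^ 2 /
            ((b - a) * (((b - a) / N) * ∑ k ∈ Finset.range N, f (a + k * (b - a) / N) ^ 2)))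
        Filter.atTop
        (𝓝 ((∫ x in a..b, f x) ^ 2 / ((b - a) * ∫ x in a..b, f x ^ 2))) :=
      ((h1.pow 2).div (tendsto_const_nhds.mul h2) hden)
    refine Filter.Tendsto.congr' ?_ htend
    filter_upwards [Filter.eventually_ge_atTop 1] with N hN
    have hNpos : (0:ℝ) < N := by exact_mod_cast hN
    have hNne : (N:ℝ) ≠ 0 := ne_of_gt hNpos
    set S₁ := ∑ k ∈ Finset.range N, f (a + k * (b - a) / N)
    set S₂ := ∑ k ∈ Finset.range N, f (a + k * (b - a) / N) ^ 2
    by_cases hS₂ : S₂ = 0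
    · simp [hS₂]
    · field_simp
  · set M := sSup (f '' Set.Icc a b) with hM_def
    have hbdd : BddAbove (f '' Set.Icc a b) :=
      (isCompact_Icc.image_of_continuousOn hf).bddAbove
    have hM : ∀ x ∈ Set.Icc a b, f x ≤ M := fun x hx => le_csSup hbdd ⟨x, hx, rfl⟩
    have hMpos : 0 < M := lt_of_lt_of_le hfx₀pos (hM x₀ hx₀)
    have hle : (∫ x in a..b, f x ^ 2) ≤ (b - a) * M ^ 2 := by
      have hint2 : IntervalIntegrable (fun x => f x ^ 2) MeasureTheory.volume a b := by
        apply ContinuousOn.intervalIntegrable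
        rwa [Set.uIcc_of_le hab.le]
      have h := intervalIntegral.integral_mono_on (f := fun x => f x ^ 2)
        (g := fun _ => M ^ 2) hab.le hint2 intervalIntegrable_const
        (fun x hx => pow_le_pow_left₀ (hpos x hx) (hM x hx) 2)
      simpa [smul_eq_mul] using h
    have key : (b - a) * ∫ x in a..b, f x ^ 2 ≤ (b - a) ^ 2 * M ^ 2 := by
      have := mul_le_mul_of_nonneg_left hle hba.le
      nlinarith
    have hpos2 : (0:ℝ) < (b - a) * ∫ x in a..b, f x ^ 2 := by positivity
    gcongr
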